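/- Let S = C[x_0,...,x_r], l a nonzero linear form, f_i = x_i^{d-1} * l, and J = (f_0,...,f_r). Then the saturation degree of J equals (r+1)d - 2r, i.e., the least integer t_0 such that J_t = sat(J)_t for all t >= t_0 is (r+1)d - 2r. -/

import Mathlib

/-!
The hyperplane example, saturation degree: in `S = ℂ[x₀,…,x_r]` with `r ≥ 1`, let `ℓ` be a
nonzero linear form, `d ≥ 2`, `fᵢ = xᵢ^(d-1)·ℓ` and `J = (f₀,…,f_r)`.  Then the saturation
degree of `J` — the least `t₀` such that `J_t = sat(J)_t` for all `t ≥ t₀` — equals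
`(r+1)d - 2r`.
-/

open MvPolynomial

noncomputable section

/-- The polynomial ring `S = ℂ[x₀, …, x_r]` in `r + 1` variables. -/
abbrev PolyRing (r : ℕ) := MvPolynomial (Fin (r + 1)) ℂ

/-- The irrelevant maximal ideal `𝔪 = (x₀, …, x_r)`. -/
def irrelevantIdeal (r : ℕ) : Ideal (PolyRing r) :=
  Ideal.span (Set.range MvPolynomial.X)

/-- The saturation `sat(J) = { f | 𝔪^k · f ⊆ J for some k ≥ 0 }`. -/
def satIdeal {r : ℕ} (J : Ideal (PolyRing r)) : Ideal (PolyRing r) :=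
  ⨆ k : ℕ, J.colon ((irrelevantIdeal r ^ k : Ideal (PolyRing r)) : Set (PolyRing r))

namespace SatAux

variable {r : ℕ}

lemma degree_single (i : Fin (r+1)) (n : ℕ) : (Finsupp.single i n).degree = n := by
  rcases eq_or_ne n 0 with rfl | hn
  · simp [Finsupp.degree]
  · rw [Finsupp.degree_apply, Finsupp.support_single_ne_zero _ hn, Finset.sum_singleton,
      Finsupp.single_eq_same]

lemma degree_eq_one {a : Fin (r+1) →₀ ℕ} (h : a.degree = 1) :
    ∃ j, a = Finsupp.single j 1 := by
  have h0 : a ≠ 0 := by rintro rfl; simp [Finsupp.degree] at h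
  obtain ⟨j, hj⟩ := Finsupp.ne_iff.mp h0
  simp only [Finsupp.coe_zero, Pi.zero_apply] at hj
  refine ⟨j, ?_⟩
  have hja : a j ≤ 1 := by have := Finsupp.le_degree j a; omega
  ext i
  rcases eq_or_ne i j with rfl | hij
  · rw [Finsupp.single_eq_same]; omega
  · rw [Finsupp.single_eq_of_ne' (Ne.symm hij)]
    by_contra hai
    have hsub : ({i, j} : Finset (Fin (r+1))) ⊆ a.support := by
      intro x hx
      simp only [Finset.mem_insert, Finset.mem_singleton] at hx
      rcases hx with rfl | rfl <;> simp [Finsupp.mem_support_iff, *]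
    have h2 : a i + a j ≤ a.degree := by
      rw [Finsupp.degree_apply]
      calc a i + a j = ∑ x ∈ ({i, j} : Finset (Fin (r+1))), a x :=
            (Finset.sum_pair hij).symm
        _ ≤ _ := Finset.sum_le_sum_of_subset hsub
    omega

lemma eq_sum_C_mul_X {l : PolyRing r} (hl : l.IsHomogeneous 1) :
    l = ∑ i : Fin (r+1), C (coeff (Finsupp.single i 1) l) * X i := by
  apply MvPolynomial.ext
  intro a
  rw [coeff_sum]
  by_cases ha : a.degree = 1
  · obtain ⟨j, rfl⟩ := degree_eq_one ha
    rw [Finset.sum_eq_single j]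
    · simp [coeff_C_mul, coeff_X']
    · intro i _ hij
      rw [coeff_C_mul, coeff_X', if_neg, mul_zero]
      intro hsingle
      exact hij (by simpa using (Finsupp.single_left_injective one_ne_zero) hsingle)
    · simp
  · rw [hl.coeff_eq_zero ha]
    symm
    apply Finset.sum_eq_zero
    intro i _
    rw [coeff_C_mul, coeff_X', if_neg, mul_zero]
    rintro rfl
    exact ha (degree_single i 1)

/-- The ideal `I = (x₀^(d-1), …, x_r^(d-1))`. -/
def powIdeal (r d : ℕ) : Ideal (PolyRing r) :=
  Ideal.span (Set.range fun i : Fin (r+1) => (X i : PolyRing r) ^ (d-1))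

lemma mem_powIdeal {d n : ℕ} {p : PolyRing r} (hp : p.IsHomogeneous n)
    (hn : (r+1) * (d-2) < n) : p ∈ powIdeal r d := by
  rw [p.as_sum]
  refine Ideal.sum_mem _ fun a ha => ?_
  have hdeg : a.degree = n := by
    rw [Finsupp.degree_eq_weight_one]
    exact hp (MvPolynomial.mem_support_iff.mp ha)
  have hex : ∃ i, d - 1 ≤ a i := by
    by_contra hc
    push_neg at hc
    have h1 : a.degree ≤ ∑ i : Fin (r+1), a i :=
      Finset.sum_le_sum_of_subset (Finset.subset_univ _)
    have h2 : ∑ i : Fin (r+1), a i ≤ ∑ _i : Fin (r+1), (d-2) :=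
      Finset.sum_le_sum fun i _ => by have := hc i; omega
    rw [Finset.sum_const, Finset.card_univ, Fintype.card_fin, smul_eq_mul] at h2
    omega
  obtain ⟨i, hi⟩ := hex
  have key : (monomial a) (coeff a p) =
      (monomial (a - Finsupp.single i (d-1))) (coeff a p) * (X i) ^ (d-1) := by
    have hfin : a - Finsupp.single i (d-1) + Finsupp.single i (d-1) = a := by
      ext k
      simp only [Finsupp.coe_add, Finsupp.coe_tsub, Pi.add_apply, Pi.sub_apply,
        Finsupp.single_apply]
      rcases eq_or_ne i k with rfl | hik
      · simp only [eq_self_iff_true, if_true]; omega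
      · simp [hik]
    rw [X_pow_eq_monomial, monomial_mul, mul_one, hfin]
  rw [key]
  exact Ideal.mul_mem_left _ _ (Ideal.subset_span ⟨i, rfl⟩)

lemma irrelevant_pow_le {d : ℕ} (hd : 2 ≤ d) :
    irrelevantIdeal r ^ ((r+1)*(d-2)+1) ≤ powIdeal r d := by
  set k := (r+1)*(d-2)+1 with hk
  rw [irrelevantIdeal, Ideal.span, Submodule.span_pow, Submodule.span_le]
  rintro x hx
  rw [Set.mem_pow] at hx
  obtain ⟨f, rfl⟩ := hx
  rw [List.prod_ofFn]
  refine SetLike.mem_coe.mpr (mem_powIdeal (n := k) ?_ (by omega))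
  have := IsHomogeneous.prod Finset.univ (fun i : Fin k => (f i : PolyRing r))
    (fun _ => 1) (fun i _ => by
      obtain ⟨j, hj⟩ := (f i).2
      simpa [← hj] using isHomogeneous_X ℂ j)
  simpa using this

lemma J_eq (d : ℕ) (l : PolyRing r) :
    Ideal.span (Set.range fun i => (X i : PolyRing r) ^ (d-1) * l)
      = Ideal.span {l} * powIdeal r d := by
  apply le_antisymm
  · rw [Ideal.span_le]
    rintro x ⟨i, rfl⟩
    exact SetLike.mem_coe.mpr <| Ideal.mem_span_singleton_mul.mpr
      ⟨X i ^ (d-1), Ideal.subset_span ⟨i, rfl⟩, by ring⟩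
  · rw [Ideal.mul_le]
    intro s hs t ht
    have hIc : powIdeal r d ≤
        (Ideal.span (Set.range fun i => (X i : PolyRing r) ^ (d-1) * l)).colon
          (Ideal.span {l}) := by
      rw [powIdeal, Ideal.span_le]
      rintro x ⟨i, rfl⟩
      rw [SetLike.mem_coe, Submodule.mem_colon]
      intro p hp
      obtain ⟨a, rfl⟩ := Ideal.mem_span_singleton'.mp hp
      rw [smul_eq_mul]
      have heq : (X i : PolyRing r) ^ (d-1) * (a * l) = a * (X i ^ (d-1) * l) := by ring
      rw [heq]
      exact Ideal.mul_mem_left _ _ (Ideal.subset_span ⟨i, rfl⟩)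
    have := Submodule.mem_colon.mp (hIc ht) s hs
    rwa [smul_eq_mul, mul_comm] at this

lemma prod_not_mem {d : ℕ} (hd : 2 ≤ d) :
    (∏ i : Fin (r+1), (X i : PolyRing r) ^ (d-2)) ∉ powIdeal r d := by
  set a0 : Fin (r+1) →₀ ℕ := Finsupp.equivFunOnFinite.symm (fun _ => d-2) with ha0
  have ha0k : ∀ k, a0 k = d - 2 := fun k => rfl
  have hprod : (∏ i : Fin (r+1), (X i : PolyRing r) ^ (d-2)) = monomial a0 1 := by
    rw [← prod_X_pow_eq_monomial]
    rw [Finset.prod_congr rfl (fun i (_ : i ∈ Finset.univ) => by rw [← ha0k i])]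
    refine (Finset.prod_subset (Finset.subset_univ _) fun x _ hx => ?_).symm
    have hx0 : a0 x = 0 := by rwa [Finsupp.notMem_support_iff] at hx
    rw [hx0, pow_zero]
  intro hmem
  rw [hprod, powIdeal, Ideal.mem_span_range_iff_exists_fun] at hmem
  obtain ⟨c, hc⟩ := hmem
  have hco := congrArg (coeff a0) hc
  rw [coeff_sum] at hco
  rw [Finset.sum_eq_zero (fun i (_ : i ∈ Finset.univ) => ?_)] at hco
  · rw [coeff_monomial, if_pos rfl] at hco
    exact one_ne_zero hco.symm
  · rw [X_pow_eq_monomial, coeff_mul_monomial', if_neg]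
    intro hle
    have := hle i
    rw [Finsupp.single_eq_same, ha0k i] at this
    omega

lemma mem_sat {J : Ideal (PolyRing r)} {g : PolyRing r} (k : ℕ)
    (h : ∀ p ∈ irrelevantIdeal r ^ k, p * g ∈ J) : g ∈ satIdeal J := by
  refine (le_iSup (fun k => J.colon ((irrelevantIdeal r ^ k : Ideal (PolyRing r)) : Set (PolyRing r))) k) ?_
  rw [Submodule.mem_colon]
  intro p hp
  rw [smul_eq_mul, mul_comm]
  exact h p hp

lemma J_le_sat {J : Ideal (PolyRing r)} : J ≤ satIdeal J := fun g hg =>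
  mem_sat 0 fun p _ => Ideal.mul_mem_left _ _ hg

lemma sat_exists {J : Ideal (PolyRing r)} {g : PolyRing r} (hg : g ∈ satIdeal J) :
    ∃ k, ∀ p ∈ irrelevantIdeal r ^ k, p * g ∈ J := by
  rw [satIdeal] at hg
  have hdir : Directed (· ≤ ·) fun k : ℕ =>
      J.colon ((irrelevantIdeal r ^ k : Ideal (PolyRing r)) : Set (PolyRing r)) := by
    intro i j
    exact ⟨max i j,
      Submodule.colon_mono le_rfl (SetLike.coe_subset_coe.mpr (Ideal.pow_le_pow_right (le_max_left i j))),
      Submodule.colon_mono le_rfl (SetLike.coe_subset_coe.mpr (Ideal.pow_le_pow_right (le_max_right i j)))⟩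
  obtain ⟨k, hk⟩ := (Submodule.mem_iSup_of_directed _ hdir).mp hg
  refine ⟨k, fun p hp => ?_⟩
  have := Submodule.mem_colon.mp hk p hp
  rwa [smul_eq_mul, mul_comm] at this

lemma prime_X_var (j : Fin (r+1)) : Prime (X j : PolyRing r) := by
  have h0 : Prime (X 0 : PolyRing r) := by
    have he : (MvPolynomial.finSuccEquiv ℂ r) (X 0) = Polynomial.X :=
      finSuccEquiv_X_zero
    refine comap_prime (MvPolynomial.finSuccEquiv ℂ r).toAlgHom.toRingHom
      (MvPolynomial.finSuccEquiv ℂ r).symm.toAlgHom.toRingHom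
      (fun a => by simp) ?_
    simpa [he] using Polynomial.prime_X (R := MvPolynomial (Fin r) ℂ)
  have he : (renameEquiv ℂ (Equiv.swap (0 : Fin (r+1)) j)).symm (X j)
      = (X 0 : PolyRing r) := by
    rw [renameEquiv_symm]
    simp [renameEquiv, Equiv.symm_swap, Equiv.swap_apply_right]
  have hswap : ⇑(Equiv.swap (0 : Fin (r+1)) j) ∘ ⇑(Equiv.swap (0 : Fin (r+1)) j) = id := by
    ext x; simp [Equiv.swap_apply_self]
  refine comap_prime (renameEquiv ℂ (Equiv.swap (0 : Fin (r+1)) j)).symm.toAlgHom.toRingHom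
    (renameEquiv ℂ (Equiv.swap (0 : Fin (r+1)) j)).toAlgHom.toRingHom
    (fun a => by simp [hswap]) ?_
  simpa [he] using h0

lemma prime_linear {l : PolyRing r} (hl : l.IsHomogeneous 1) (hl0 : l ≠ 0) :
    Prime l := by
  classical
  set c : Fin (r+1) → ℂ := fun i => coeff (Finsupp.single i 1) l with hcdef
  have hlrep : l = ∑ i : Fin (r+1), C (c i) * X i := eq_sum_C_mul_X hl
  obtain ⟨j, hj⟩ : ∃ j, c j ≠ 0 := by
    by_contra hall
    push_neg at hall
    exact hl0 (hlrep.trans (by simp [hall]))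
  set w : PolyRing r := ∑ i ∈ Finset.univ.erase j, C (c i) * X i with hwdef
  have hlw : l = C (c j) * X j + w := by
    rw [hlrep, ← Finset.add_sum_erase _ _ (Finset.mem_univ j)]
  set α : PolyRing r →ₐ[ℂ] PolyRing r :=
    aeval (fun i => if i = j then C (c j)⁻¹ * (X j - w) else X i) with hαdef
  set β : PolyRing r →ₐ[ℂ] PolyRing r :=
    aeval (fun i => if i = j then l else X i) with hβdef
  have hαw : α w = w := by
    rw [hwdef, map_sum]
    refine Finset.sum_congr rfl fun i hi => ?_
    rw [map_mul, aeval_C, aeval_X, if_neg (Finset.ne_of_mem_erase hi)]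
    simp [algebraMap_eq]
  have hβw : β w = w := by
    rw [hwdef, map_sum]
    refine Finset.sum_congr rfl fun i hi => ?_
    rw [map_mul, aeval_C, aeval_X, if_neg (Finset.ne_of_mem_erase hi)]
    simp [algebraMap_eq]
  have hαl : α l = X j := by
    rw [hlw, map_add, map_mul, aeval_C, aeval_X, if_pos rfl, hαw, algebraMap_eq,
      ← mul_assoc, ← C_mul, mul_inv_cancel₀ hj, C_1, one_mul]
    ring
  have hinv : ∀ a, β (α a) = a := by
    have hcomp : β.comp α = AlgHom.id ℂ (PolyRing r) := by
      apply MvPolynomial.algHom_ext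
      intro i
      rw [AlgHom.comp_apply, AlgHom.id_apply, aeval_X]
      by_cases hij : i = j
      · subst hij
        rw [if_pos rfl, map_mul, map_sub, aeval_X, if_pos rfl, hβw, aeval_C, algebraMap_eq]
        rw [hlw, add_sub_cancel_right, ← mul_assoc, ← C_mul, inv_mul_cancel₀ hj, C_1, one_mul]
      · rw [if_neg hij, aeval_X, if_neg hij]
    intro a
    have := congrArg (fun f => f a) (congrArg DFunLike.coe hcomp)
    simpa using this
  exact comap_prime α.toRingHom β.toRingHom hinv
    (by rw [show α.toRingHom l = α l from rfl, hαl]; exact prime_X_var j)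

lemma homog_factor {t : ℕ} (ht : 1 ≤ t) {l g h : PolyRing r} (hl : l.IsHomogeneous 1)
    (hl0 : l ≠ 0) (hg : g.IsHomogeneous t) (hgh : g = l * h) :
    h.IsHomogeneous (t - 1) := by
  have hcomp : ∀ i, i ≠ t - 1 → homogeneousComponent i h = 0 := by
    intro i hi
    have hu : (l * homogeneousComponent i h).IsHomogeneous (1 + i) :=
      hl.mul (homogeneousComponent_isHomogeneous i h)
    have hzero : l * homogeneousComponent i h = 0 := by
      apply MvPolynomial.ext
      intro a
      rw [coeff_zero]
      rcases eq_or_ne a.degree (1 + i) with had | had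
      · by_cases hiN : i ∈ Finset.range (h.totalDegree + 1)
        · have hsum : g = ∑ j ∈ Finset.range (h.totalDegree + 1),
              l * homogeneousComponent j h := by
            rw [← Finset.mul_sum, sum_homogeneousComponent, hgh]
          have h1 : coeff a g = ∑ j ∈ Finset.range (h.totalDegree + 1),
              coeff a (l * homogeneousComponent j h) := by
            rw [← coeff_sum, ← hsum]
          have h3 : coeff a g = coeff a (l * homogeneousComponent i h) := by
            rw [h1]
            refine Finset.sum_eq_single_of_mem i hiN fun j _ hj => ?_
            refine (hl.mul (homogeneousComponent_isHomogeneous j h)).coeff_eq_zero ?_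
            omega
          have h4 : coeff a g = 0 := hg.coeff_eq_zero (by omega)
          rw [← h3, h4]
        · rw [homogeneousComponent_eq_zero _ h (by
            simp only [Finset.mem_range] at hiN; omega), mul_zero, coeff_zero]
      · exact hu.coeff_eq_zero had
    rcases mul_eq_zero.mp hzero with h' | h'
    · exact absurd h' hl0
    · exact h'
  by_cases hN : t - 1 ≤ h.totalDegree
  · have hhe : h = homogeneousComponent (t-1) h := by
      conv_lhs => rw [← sum_homogeneousComponent h]
      refine Finset.sum_eq_single_of_mem (t-1) (Finset.mem_range.mpr (by omega))
        fun j _ hj => hcomp j hj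
    rw [hhe]
    exact homogeneousComponent_isHomogeneous _ _
  · have hhe : h = 0 := by
      conv_lhs => rw [← sum_homogeneousComponent h]
      refine Finset.sum_eq_zero fun j hj => hcomp j ?_
      rw [Finset.mem_range] at hj
      omega
    rw [hhe]
    exact isHomogeneous_zero _ _ _

end SatAux

theorem satdeg_hyperplane_example (r d : ℕ) (hr : 1 ≤ r) (hd : 2 ≤ d)
    (l : PolyRing r) (hl : l.IsHomogeneous 1) (hl0 : l ≠ 0)
    (J : Ideal (PolyRing r))
    (hJ : J = Ideal.span (Set.range fun i => (MvPolynomial.X i) ^ (d - 1) * l)) :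
    IsLeast {t0 : ℕ | ∀ t, t0 ≤ t → ∀ g : PolyRing r, g.IsHomogeneous t →
        (g ∈ J ↔ g ∈ satIdeal J)}
      ((r + 1) * d - 2 * r) := by
  classical
  have hdd : (r + 1) * d = (r+1)*(d-2) + 2*(r+1) := by
    have h2 : d - 2 + 2 = d := by omega
    calc (r+1)*d = (r+1)*((d-2)+2) := by rw [h2]
      _ = (r+1)*(d-2) + (r+1)*2 := by ring
      _ = _ := by ring
  set A := (r+1)*(d-2) with hA
  have ht0A : (r + 1) * d - 2 * r = A + 2 := by omega
  have hJeq : J = Ideal.span {l} * SatAux.powIdeal r d := by rw [hJ, SatAux.J_eq]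
  have hmemJ : ∀ g : PolyRing r, g ∈ J ↔ ∃ z ∈ SatAux.powIdeal r d, l * z = g := by
    intro g; rw [hJeq]; exact Ideal.mem_span_singleton_mul
  have hlprime := SatAux.prime_linear hl hl0
  have hlsat : l ∈ satIdeal J := by
    refine SatAux.mem_sat (A + 1) fun p hp => ?_
    have hpI : p ∈ SatAux.powIdeal r d := SatAux.irrelevant_pow_le hd hp
    exact (hmemJ _).mpr ⟨p, hpI, mul_comm l p⟩
  -- data for the evaluation argument
  set c : Fin (r+1) → ℂ := fun i => coeff (Finsupp.single i 1) l with hcdef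
  have hlrep : l = ∑ i : Fin (r+1), MvPolynomial.C (c i) * MvPolynomial.X i :=
    SatAux.eq_sum_C_mul_X hl
  obtain ⟨j, hj⟩ : ∃ j, c j ≠ 0 := by
    by_contra hall
    push_neg at hall
    exact hl0 (hlrep.trans (by simp [hall]))
  have hone : (1 : Fin (r+1)) ≠ 0 := by
    intro h
    have := congrArg Fin.val h
    rw [Fin.val_one'] at this
    simp at this
    omega
  set j' : Fin (r+1) := if j = 0 then 1 else 0 with hj'def
  have hjj' : j' ≠ j := by
    rcases eq_or_ne j 0 with h0 | h0
    · rw [hj'def, if_pos h0, h0]; exact hone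
    · rw [hj'def, if_neg h0]; exact Ne.symm h0
  set v : Fin (r+1) → ℂ := fun i => if i = j then c j' else if i = j' then -(c j) else 0
    with hvdef
  have hvj' : v j' = -(c j) := by simp [hvdef, hjj']
  have hlv : eval v l = 0 := by
    rw [hlrep, map_sum]
    rw [Finset.sum_congr rfl fun i (_ : i ∈ Finset.univ) =>
      (by rw [map_mul, eval_C, eval_X] :
        eval v (MvPolynomial.C (c i) * MvPolynomial.X i) = c i * v i)]
    have hsub : ∑ i : Fin (r+1), c i * v i
        = ∑ i ∈ ({j, j'} : Finset (Fin (r+1))), c i * v i := by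
      refine (Finset.sum_subset (Finset.subset_univ _) fun x _ hx => ?_).symm
      simp only [Finset.mem_insert, Finset.mem_singleton, not_or] at hx
      simp [hvdef, hx.1, hx.2]
    rw [hsub, Finset.sum_pair (Ne.symm hjj')]
    simp [hvdef, hjj']
    ring
  constructor
  · -- membership
    intro t htt g hg
    refine ⟨fun hgJ => SatAux.J_le_sat hgJ, fun hgs => ?_⟩
    obtain ⟨k, hk⟩ := SatAux.sat_exists hgs
    rcases Nat.eq_zero_or_pos k with rfl | hkpos
    · have h1 : (1 : PolyRing r) ∈ irrelevantIdeal r ^ 0 := by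
        rw [pow_zero, Ideal.one_eq_top]; trivial
      simpa using hk 1 h1
    · have hXm : MvPolynomial.X j' ∈ irrelevantIdeal r := by
        rw [irrelevantIdeal]
        exact Ideal.subset_span ⟨j', rfl⟩
      have hXj'k : MvPolynomial.X j' ^ k * g ∈ J :=
        hk _ (Ideal.pow_mem_pow hXm k)
      have hspan : MvPolynomial.X j' ^ k * g ∈ Ideal.span {l} := by
        rw [hJeq] at hXj'k
        exact Ideal.mul_le_left hXj'k
      have hdvd2 : l ∣ MvPolynomial.X j' ^ k * g := Ideal.mem_span_singleton.mp hspan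
      have hlg : l ∣ g := by
        rcases hlprime.2.2 _ _ hdvd2 with hca | hcb
        · exfalso
          obtain ⟨q, hq⟩ := hca
          have hev := congrArg (eval v) hq
          rw [map_pow, eval_X, map_mul, hlv, zero_mul] at hev
          rw [hvj'] at hev
          have hcj0 : -(c j) = 0 := pow_eq_zero_iff (by omega) |>.mp hev
          exact hj (by simpa using hcj0)
        · exact hcb
      obtain ⟨h', rfl⟩ := hlg
      have hh' : h'.IsHomogeneous (t - 1) :=
        SatAux.homog_factor (by omega) hl hl0 hg rfl
      have hh'I : h' ∈ SatAux.powIdeal r d :=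
        SatAux.mem_powIdeal hh' (by omega)
      exact (hmemJ _).mpr ⟨h', hh'I, rfl⟩
  · -- lower bound
    intro s hs
    by_contra hcon
    push_neg at hcon
    set m0 : PolyRing r := ∏ i : Fin (r+1), MvPolynomial.X i ^ (d-2) with hm0
    have hm0hom : m0.IsHomogeneous A := by
      have := MvPolynomial.IsHomogeneous.prod Finset.univ
        (fun i : Fin (r+1) => (MvPolynomial.X i : PolyRing r) ^ (d-2))
        (fun _ => d - 2) (fun i _ => isHomogeneous_X_pow i (d-2))
      have hsum : ∑ _i : Fin (r+1), (d - 2) = A := by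
        rw [Finset.sum_const, Finset.card_univ, Fintype.card_fin, smul_eq_mul]
      rwa [hsum] at this
    have hg0hom : (m0 * l).IsHomogeneous (A + 1) := hm0hom.mul hl
    have hg0sat : m0 * l ∈ satIdeal J := Ideal.mul_mem_left _ _ hlsat
    have hg0J : m0 * l ∉ J := by
      intro hg0J
      obtain ⟨z, hz, hze⟩ := (hmemJ _).mp hg0J
      have : z = m0 := by
        apply mul_left_cancel₀ hl0
        rw [hze]; ring
      rw [this] at hz
      exact SatAux.prod_not_mem hd hz
    exact hg0J ((hs (A + 1) (by omega) (m0 * l) hg0hom).mpr hg0sat)
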